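/- Let X and Y be complex Banach spaces, A ∈ B(X), B ∈ B(Y), C ∈ B(Y, X), and let M_C ∈ B(X ⊕ Y) be the upper-triangular operator matrix M_C(x, y) = (Ax + Cy, By). If A is invertible in B(X), then M_C has finite ascent if and only if B has finite ascent. -/

import Mathlib

noncomputable section

open ContinuousLinearMap Metric Set

variable {E : Type*} [NormedAddCommGroup E] [NormedSpace ℂ E]
variable {X Y : Type*} [NormedAddCommGroup X] [NormedSpace ℂ X] [CompleteSpace X]
  [NormedAddCommGroup Y] [NormedSpace ℂ Y] [CompleteSpace Y]

/-- `T` has finite ascent: some power has the same kernel as the next one. -/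
def HasFiniteAscent (T : E →L[ℂ] E) : Prop :=
  ∃ k : ℕ, LinearMap.ker ((T ^ k : E →L[ℂ] E) : E →ₗ[ℂ] E) = LinearMap.ker ((T ^ (k + 1) : E →L[ℂ] E) : E →ₗ[ℂ] E)

/-- The upper-triangular operator matrix `M_C (x, y) = (A x + C y, B y)` on `X ⊕ Y`. -/
def ucMat (A : X →L[ℂ] X) (B : Y →L[ℂ] Y) (C : Y →L[ℂ] X) :
    (X × Y) →L[ℂ] (X × Y) :=
  (A.comp (ContinuousLinearMap.fst ℂ X Y) + C.comp (ContinuousLinearMap.snd ℂ X Y)).prod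
    (B.comp (ContinuousLinearMap.snd ℂ X Y))

lemma ucMat_apply (A : X →L[ℂ] X) (B : Y →L[ℂ] Y) (C : Y →L[ℂ] X) (x : X) (y : Y) :
    ucMat A B C (x, y) = (A x + C y, B y) := rfl

lemma ucMat_pow_snd (A : X →L[ℂ] X) (B : Y →L[ℂ] Y) (C : Y →L[ℂ] X) (n : ℕ) (z : X × Y) :
    ((ucMat A B C ^ n) z).2 = (B ^ n) z.2 := by
  induction n with
  | zero => simp
  | succ n ih =>
      rw [pow_succ', pow_succ', ContinuousLinearMap.mul_apply, ContinuousLinearMap.mul_apply]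
      rcases h : (ucMat A B C ^ n) z with ⟨u, v⟩
      have hv : v = (B ^ n) z.2 := by rw [← ih, h]
      rw [ucMat_apply]
      simp [hv]

lemma ucMat_pow_left (A : X →L[ℂ] X) (B : Y →L[ℂ] Y) (C : Y →L[ℂ] X) (n : ℕ) (x : X) :
    (ucMat A B C ^ n) (x, 0) = ((A ^ n) x, 0) := by
  induction n with
  | zero => simp
  | succ n ih =>
      rw [pow_succ', ContinuousLinearMap.mul_apply, ih, ucMat_apply]
      simp [pow_succ', mul_apply]

lemma isUnit_injective (A : X →L[ℂ] X) (hA : IsUnit A) : Function.Injective A := by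
  obtain ⟨u, hu⟩ := hA
  intro a b h
  have : (↑u⁻¹ * A) a = (↑u⁻¹ * A) b := by simp [mul_apply, h]
  simpa [← hu, u.inv_mul] using this

theorem stmt2 (A : X →L[ℂ] X) (B : Y →L[ℂ] Y) (C : Y →L[ℂ] X) (hA : IsUnit A) :
    HasFiniteAscent (ucMat A B C) ↔ HasFiniteAscent B := by
  have hAinj := isUnit_injective A hA
  constructor
  · rintro ⟨k, hk⟩
    refine ⟨k, le_antisymm ?_ ?_⟩
    · intro y hy
      simp only [LinearMap.mem_ker, ContinuousLinearMap.coe_coe] at hy ⊢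
      rw [pow_succ', ContinuousLinearMap.mul_apply, hy, map_zero]
    · intro y hy
      simp only [LinearMap.mem_ker, ContinuousLinearMap.coe_coe] at hy ⊢
      -- choose x with M^{k+1}(x,y) = 0
      obtain ⟨u, hu⟩ := hA.pow (k + 1)
      set c : X := ((ucMat A B C ^ (k + 1)) (0, y)).1 with hc
      set x : X := (↑u⁻¹ : X →L[ℂ] X) (-c) with hx
      have hAx : (A ^ (k + 1)) x = -c := by
        have h1 : (A ^ (k + 1)) * (↑u⁻¹ : X →L[ℂ] X) = 1 := by rw [← hu]; exact u.mul_inv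
        calc (A ^ (k + 1)) x = ((A ^ (k + 1)) * (↑u⁻¹ : X →L[ℂ] X)) (-c) := rfl
          _ = -c := by rw [h1]; rfl
      have hmem : (x, y) ∈ LinearMap.ker ((ucMat A B C ^ (k + 1) : (X × Y) →L[ℂ] (X × Y)) : (X × Y) →ₗ[ℂ] (X × Y)) := by
        simp only [LinearMap.mem_ker, ContinuousLinearMap.coe_coe]
        have hsplit : (ucMat A B C ^ (k + 1)) (x, y)
            = (ucMat A B C ^ (k + 1)) (x, 0) + (ucMat A B C ^ (k + 1)) (0, y) := by
          rw [← map_add]; norm_num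
        have hsnd : ((ucMat A B C ^ (k + 1)) (0, y)).2 = 0 := by
          rw [ucMat_pow_snd]; exact hy
        rw [hsplit, ucMat_pow_left]
        ext
        · simp [hAx, hc]
        · simp only [Prod.snd_add, hsnd, add_zero, Prod.snd_zero]
      rw [← hk] at hmem
      have := congrArg Prod.snd (LinearMap.mem_ker.mp hmem)
      rwa [ContinuousLinearMap.coe_coe, ucMat_pow_snd] at this
  · rintro ⟨k, hk⟩
    refine ⟨k, le_antisymm ?_ ?_⟩
    · intro z hz
      simp only [LinearMap.mem_ker, ContinuousLinearMap.coe_coe] at hz ⊢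
      rw [pow_succ', ContinuousLinearMap.mul_apply, hz, map_zero]
    · rintro ⟨x, y⟩ hz
      simp only [LinearMap.mem_ker, ContinuousLinearMap.coe_coe] at hz ⊢
      have hy1 : (B ^ (k + 1)) y = 0 := by
        have := congrArg Prod.snd hz
        rwa [ucMat_pow_snd] at this
      have hyk : (B ^ k) y = 0 := by
        have : y ∈ LinearMap.ker ((B ^ (k + 1) : Y →L[ℂ] Y) : Y →ₗ[ℂ] Y) := hy1
        rw [← hk] at this
        exact this
      rcases h : (ucMat A B C ^ k) (x, y) with ⟨u, v⟩
      have hv : v = 0 := by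
        have := ucMat_pow_snd A B C k (x, y)
        rw [h] at this
        simpa [hyk] using this
      have hstep : (ucMat A B C ^ (k + 1)) (x, y) = ucMat A B C (u, v) := by
        rw [pow_succ', ContinuousLinearMap.mul_apply, h]
      rw [hz] at hstep
      rw [hv, ucMat_apply] at hstep
      have hAu : A u = 0 := by
        have := congrArg Prod.fst hstep
        simpa using this.symm
      have hu0 : u = 0 := hAinj (by simp [hAu])
      rw [hu0, hv]; rfl
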